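/- Let (Ω, 𝓕) be a measurable space, let q and p be probability measures on (Ω, 𝓕), and let p₁, p₂ ∈ ℝ≥0 with p₁ + p₂ = 1. Then D_KL(p₁ • p + p₂ • q ‖ p) ≤ p₂ · D_KL(q ‖ p), where both sides take values in [0, ∞]. -/

import Mathlib

open MeasureTheory
open scoped ENNReal NNReal Classical

/-- Kullback–Leibler divergence, valued in `[0, ∞]`:
`D_KL(μ‖ν) = ∫ log(dμ/dν) dμ` when `μ ≪ ν` and the integrand is `μ`-integrable,
and `+∞` otherwise. -/
noncomputable def klDiv {Ω : Type*} [MeasurableSpace Ω] (μ ν : Measure Ω) : ℝ≥0∞ :=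
  if μ ≪ ν ∧ Integrable (fun ω => Real.log (μ.rnDeriv ν ω).toReal) μ then
    ENNReal.ofReal (∫ ω, Real.log (μ.rnDeriv ν ω).toReal ∂μ)
  else ⊤

private lemma neg_one_le_mul_log {x : ℝ} (hx : 0 ≤ x) : -1 ≤ x * Real.log x := by
  rcases eq_or_lt_of_le hx with h | h
  · simp [← h]
  · have h1 : Real.log x⁻¹ ≤ x⁻¹ - 1 := Real.log_le_sub_one_of_pos (inv_pos.mpr h)
    rw [Real.log_inv] at h1
    have : 1 - x⁻¹ ≤ Real.log x := by linarith
    have h2 : x * (1 - x⁻¹) ≤ x * Real.log x := by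
      exact mul_le_mul_of_nonneg_left this hx
    have h3 : x * (1 - x⁻¹) = x - 1 := by
      field_simp
    nlinarith

private lemma mul_log_convex_ineq {p₁ p₂ x : ℝ} (h1 : 0 ≤ p₁) (h2 : 0 ≤ p₂)
    (hp : p₁ + p₂ = 1) (hx : 0 ≤ x) :
    (p₁ + p₂ * x) * Real.log (p₁ + p₂ * x) ≤ p₂ * (x * Real.log x) := by
  have := Real.convexOn_mul_log.2 (Set.mem_Ici.mpr zero_le_one)
    (Set.mem_Ici.mpr hx) h1 h2 hp
  simp only [smul_eq_mul, mul_one, Real.log_one, mul_zero] at this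
  linarith

/-- Part two of Proposition 1: when the first mixture component equals the
reference measure, `D_KL(p₁ • p + p₂ • q ‖ p) ≤ p₂ · D_KL(q ‖ p)`. -/
theorem klDiv_mixture_self_le {Ω : Type*} [MeasurableSpace Ω]
    (q p : Measure Ω) [IsProbabilityMeasure q] [IsProbabilityMeasure p]
    (p₁ p₂ : ℝ≥0) (hp : p₁ + p₂ = 1) :
    klDiv (p₁ • p + p₂ • q) p ≤ p₂ * klDiv q p := by
  classical
  -- case p₂ = 0
  by_cases hp2 : p₂ = 0
  · subst hp2
    have hp1 : p₁ = 1 := by simpa using hp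
    subst hp1
    have hμ : (1 : ℝ≥0) • p + (0 : ℝ≥0) • q = p := by simp
    rw [hμ]
    have hself : klDiv p p = 0 := by
      have hzero : (fun ω => Real.log (p.rnDeriv p ω).toReal) =ᵐ[p] fun _ => (0:ℝ) := by
        filter_upwards [Measure.rnDeriv_self p] with ω hω
        simp [hω]
      have hint : Integrable (fun ω => Real.log (p.rnDeriv p ω).toReal) p :=
        (integrable_const (0:ℝ)).congr hzero.symm
      rw [klDiv, if_pos ⟨Measure.AbsolutelyContinuous.rfl, hint⟩,
        integral_congr_ae hzero]
      simp
    simp [hself]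
  · -- case klDiv q p = ⊤
    by_cases htop : klDiv q p = ⊤
    · rw [htop, ENNReal.mul_top (by exact_mod_cast hp2)]
      exact le_top
    · -- main case
      rw [klDiv] at htop
      split_ifs at htop with hcond
      swap
      · exact absurd rfl htop
      obtain ⟨hq, hint⟩ := hcond
      set μ := p₁ • p + p₂ • q with hμdef
      have hμp : μ ≪ p :=
        Measure.AbsolutelyContinuous.add_left_iff.mpr
          ⟨Measure.AbsolutelyContinuous.rfl.smul_left p₁, hq.smul_left p₂⟩
      have hμprob : IsProbabilityMeasure μ := by
        constructor
        rw [hμdef, Measure.add_apply, Measure.smul_apply, Measure.smul_apply, measure_univ,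
          measure_univ, ENNReal.smul_def, ENNReal.smul_def, smul_eq_mul, smul_eq_mul, mul_one,
          mul_one, ← ENNReal.coe_add, hp, ENNReal.coe_one]
      set f : Ω → ℝ := fun ω => (q.rnDeriv p ω).toReal with hf
      set g : Ω → ℝ := fun ω => (μ.rnDeriv p ω).toReal with hg
      -- a.e. identity for g
      have hgae : g =ᵐ[p] fun ω => (p₁ : ℝ) + (p₂ : ℝ) * f ω := by
        have h1 := Measure.rnDeriv_add' (p₁ • p) (p₂ • q) p
        have h2 := Measure.rnDeriv_smul_left' p p p₁
        have h3 := Measure.rnDeriv_smul_left' q p p₂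
        have h4 := Measure.rnDeriv_self p
        have h5 := Measure.rnDeriv_lt_top q p
        filter_upwards [h1, h2, h3, h4, h5] with ω e1 e2 e3 e4 e5
        have : μ.rnDeriv p ω = (p₁ : ℝ≥0∞) + (p₂ : ℝ≥0∞) * q.rnDeriv p ω := by
          show (p₁ • p + p₂ • q).rnDeriv p ω = _
          rw [e1]
          simp only [Pi.add_apply, Pi.smul_apply] at e2 e3 ⊢
          rw [e2, e3, e4]
          simp [ENNReal.smul_def]
        rw [hg]
        simp only [this]
        rw [ENNReal.toReal_add (by simp) (ENNReal.mul_ne_top (by simp) e5.ne)]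
        rw [ENNReal.toReal_mul]
        simp [hf]
      have hf_nonneg : ∀ ω, 0 ≤ f ω := fun ω => ENNReal.toReal_nonneg
      -- integrability of f * log f wrt p
      have hffi : Integrable (fun ω => f ω • Real.log (f ω)) p :=
        (MeasureTheory.integrable_rnDeriv_smul_iff hq).mpr hint
      -- the key a.e. pointwise inequality
      have hae_ineq : ∀ᵐ ω ∂p, g ω * Real.log (g ω) ≤ (p₂ : ℝ) * (f ω * Real.log (f ω)) := by
        filter_upwards [hgae] with ω hω
        rw [hω]
        exact mul_log_convex_ineq p₁.coe_nonneg p₂.coe_nonneg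
          (by exact_mod_cast hp) (hf_nonneg ω)
      -- integrability of g * log g wrt p
      have hgmeas : AEStronglyMeasurable (fun ω => g ω * Real.log (g ω)) p := by
        have : Measurable g := (Measure.measurable_rnDeriv μ p).ennreal_toReal
        exact (this.mul (Real.measurable_log.comp this)).aestronglyMeasurable
      have hggi : Integrable (fun ω => g ω * Real.log (g ω)) p := by
        have hbound : Integrable (fun ω => 1 + (p₂ : ℝ) * |f ω * Real.log (f ω)|) p :=
          (integrable_const (1:ℝ)).add ((hffi.abs.const_mul _))
        refine hbound.mono' hgmeas ?_
        filter_upwards [hae_ineq] with ω hω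
        rw [Real.norm_eq_abs, abs_le]
        constructor
        · have := neg_one_le_mul_log (x := g ω) ENNReal.toReal_nonneg
          have h0 : (0:ℝ) ≤ (p₂ : ℝ) * |f ω * Real.log (f ω)| :=
            mul_nonneg p₂.coe_nonneg (abs_nonneg _)
          linarith
        · calc g ω * Real.log (g ω) ≤ (p₂ : ℝ) * (f ω * Real.log (f ω)) := hω
            _ ≤ (p₂ : ℝ) * |f ω * Real.log (f ω)| :=
              mul_le_mul_of_nonneg_left (le_abs_self _) p₂.coe_nonneg
            _ ≤ 1 + (p₂ : ℝ) * |f ω * Real.log (f ω)| := by linarith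
      -- integrability of log g wrt μ
      have hintμ : Integrable (fun ω => Real.log (μ.rnDeriv p ω).toReal) μ := by
        rw [← MeasureTheory.integrable_rnDeriv_smul_iff hμp]
        exact hggi.congr (by filter_upwards with ω; simp [hg, smul_eq_mul])
      -- rewrite the two integrals
      have hInt1 : ∫ ω, Real.log (μ.rnDeriv p ω).toReal ∂μ
          = ∫ ω, g ω * Real.log (g ω) ∂p := by
        rw [← MeasureTheory.integral_rnDeriv_smul hμp]
        rfl
      have hInt2 : ∫ ω, Real.log (q.rnDeriv p ω).toReal ∂q
          = ∫ ω, f ω * Real.log (f ω) ∂p := by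
        rw [← MeasureTheory.integral_rnDeriv_smul hq]
        rfl
      -- final computation
      rw [klDiv, klDiv, if_pos ⟨hμp, hintμ⟩, if_pos ⟨hq, hint⟩, hInt1, hInt2]
      have hle : ∫ ω, g ω * Real.log (g ω) ∂p
          ≤ (p₂ : ℝ) * ∫ ω, f ω * Real.log (f ω) ∂p := by
        rw [← integral_const_mul]
        exact integral_mono_ae hggi (hffi.const_mul _) hae_ineq
      calc ENNReal.ofReal (∫ ω, g ω * Real.log (g ω) ∂p)
          ≤ ENNReal.ofReal ((p₂ : ℝ) * ∫ ω, f ω * Real.log (f ω) ∂p) :=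
            ENNReal.ofReal_le_ofReal hle
        _ = (p₂ : ℝ≥0∞) * ENNReal.ofReal (∫ ω, f ω * Real.log (f ω) ∂p) := by
            rw [ENNReal.ofReal_mul p₂.coe_nonneg, ENNReal.ofReal_coe_nnreal]
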